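/- Harmonic decomposition: let m ∈ ℕ and let P ∈ Pol be homogeneous of degree m. Then there exists a unique family of polynomials H_0, H_1, …, H_{⌊m/2⌋} ∈ Pol such that each H_j is homogeneous of degree m − 2j, Δ H_j = 0 for every j, and P = Σ_{j=0}^{⌊m/2⌋} r^{2j} · H_j. -/

import Mathlib

open MvPolynomial

/-- The six index pairs `(a,b)` with `a < b`: the variables `z^{ab}`. -/
abbrev Idx : Type := {p : Fin 4 × Fin 4 // p.1 < p.2}

/-- `Pol = ℂ[z^{12}, z^{13}, z^{14}, z^{23}, z^{24}, z^{34}]`. -/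
abbrev Pol : Type := MvPolynomial Idx ℂ

/-- The generic antisymmetric matrix of variables: `Z a b = z^{ab}`,
extended by `z^{ba} = -z^{ab}` and `z^{aa} = 0`. -/
noncomputable def Z (a b : Fin 4) : Pol :=
  if h : a < b then X ⟨(a, b), h⟩
  else if h' : b < a then -X ⟨(b, a), h'⟩
  else 0

/-- `eps a b c d` is the sign of `(a,b,c,d)` as a permutation of `(0,1,2,3)`,
and `0` if two indices coincide (via the Vandermonde product formula). -/
noncomputable def eps (a b c d : Fin 4) : ℂ :=
  ((((b.val : ℤ) - a.val) * ((c.val : ℤ) - a.val) * ((d.val : ℤ) - a.val) *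
      ((c.val : ℤ) - b.val) * ((d.val : ℤ) - b.val) * ((d.val : ℤ) - c.val) : ℤ) : ℂ) / 12

/-- The lowered variables `z_{ab} = (1/2) ∑_{c,d} ε_{abcd} z^{cd}`. -/
noncomputable def Zlow (a b : Fin 4) : Pol :=
  (1 / 2 : ℂ) • ∑ c, ∑ d, eps a b c d • Z c d

/-- The partial derivative `∂_{ab}` with respect to `z^{ab}` (for `a < b`),
extended by `∂_{ba} = -∂_{ab}` and `∂_{aa} = 0`. -/
noncomputable def D (a b : Fin 4) : Pol →ₗ[ℂ] Pol :=
  if h : a < b then (pderiv ⟨(a, b), h⟩).toLinearMap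
  else if h' : b < a then -(pderiv ⟨(b, a), h'⟩).toLinearMap
  else 0

/-- The raised derivative `∂^{ab} = (1/2) ∑_{c,d} ε^{abcd} ∂_{cd}`. -/
noncomputable def Dup (a b : Fin 4) : Pol →ₗ[ℂ] Pol :=
  (1 / 2 : ℂ) • ∑ c, ∑ d, eps a b c d • D c d

/-- The Laplacian `Δ = 2(∂₁₂∂₃₄ − ∂₁₃∂₂₄ + ∂₁₄∂₂₃)`. -/
noncomputable def Lap : Pol →ₗ[ℂ] Pol :=
  (2 : ℂ) • (D 0 1 ∘ₗ D 2 3 - D 0 2 ∘ₗ D 1 3 + D 0 3 ∘ₗ D 1 2)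

/-- The squared radius `r² = 2(z¹²z³⁴ − z¹³z²⁴ + z¹⁴z²³)`. -/
noncomputable def r2 : Pol :=
  (2 : ℂ) • (Z 0 1 * Z 2 3 - Z 0 2 * Z 1 3 + Z 0 3 * Z 1 2)

-- generic lemmas
section Generic
variable {σ : Type*} {R : Type*} [CommRing R]

lemma mydeg_add (a b : σ →₀ ℕ) : (a + b).degree = a.degree + b.degree := by
  simp only [Finsupp.degree_eq_weight_one]; exact map_add _ a b

lemma mydeg_single (i : σ) : (Finsupp.single i (1:ℕ)).degree = 1 := by
  classical
  simp [Finsupp.degree_apply, Finsupp.support_single_ne_zero i one_ne_zero]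

lemma pderiv_as_sum [DecidableEq σ] (p : MvPolynomial σ R) (i : σ) :
    pderiv i p = ∑ v ∈ p.support, monomial (v - Finsupp.single i 1) (coeff v p * v i) := by
  conv_lhs => rw [p.as_sum]
  rw [map_sum]
  exact Finset.sum_congr rfl fun v _ => pderiv_monomial

lemma pderiv_eq_zero_of_isHomogeneous_zero [DecidableEq σ] {p : MvPolynomial σ R}
    (h : p.IsHomogeneous 0) (i : σ) : pderiv i p = 0 := by
  have h0 : p.totalDegree = 0 := (totalDegree_zero_iff_isHomogeneous _).mpr h
  rw [totalDegree_eq_zero_iff] at h0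
  rw [pderiv_as_sum]
  exact Finset.sum_eq_zero fun v hv => by rw [h0 v hv i]; simp

lemma pderiv_isHomogeneous [DecidableEq σ] {p : MvPolynomial σ R} {n : ℕ}
    (h : p.IsHomogeneous n) (i : σ) : (pderiv i p).IsHomogeneous (n - 1) := by
  rw [pderiv_as_sum]
  apply IsHomogeneous.sum
  intro v hv
  by_cases h0 : v i = 0
  · rw [h0]; simp only [Nat.cast_zero, mul_zero, map_zero]
    exact isHomogeneous_zero _ _ _
  · apply isHomogeneous_monomial
    have hle : Finsupp.single i 1 ≤ v := by
      rw [Finsupp.single_le_iff]; omega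
    have hdv : v.degree = n := by
      by_contra hne
      exact (MvPolynomial.mem_support_iff.mp hv) (h.coeff_eq_zero hne)
    have h2 : (v - Finsupp.single i 1) + Finsupp.single i 1 = v := tsub_add_cancel_of_le hle
    have := congrArg Finsupp.degree h2
    rw [mydeg_add, mydeg_single] at this
    omega

lemma euler_monomial [Fintype σ] [DecidableEq σ] (v : σ →₀ ℕ) (c : R) :
    ∑ i : σ, X i * pderiv i (monomial v c) = (v.degree : R) • monomial v c := by
  have key : ∀ i : σ, X (R := R) i * pderiv i (monomial v c) = monomial v (c * v i) := by
    intro i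
    rw [pderiv_monomial]
    by_cases h0 : v i = 0
    · simp [h0]
    · have hle : Finsupp.single i 1 ≤ v := by
        rw [Finsupp.single_le_iff]; omega
      rw [X, monomial_mul, one_mul, add_comm, tsub_add_cancel_of_le hle]
  simp only [key]
  rw [← map_sum, ← Finset.mul_sum]
  have hs : ∑ i : σ, ((v i : R)) = (v.degree : R) := by
    rw [Finsupp.degree_apply, Nat.cast_sum]
    exact (Finset.sum_subset (Finset.subset_univ _) (by
      intro x _ hx
      rw [Finsupp.notMem_support_iff] at hx
      simp [hx])).symm
  rw [hs, smul_monomial, smul_eq_mul, mul_comm]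

lemma euler [Fintype σ] [DecidableEq σ] {p : MvPolynomial σ R} {n : ℕ}
    (h : p.IsHomogeneous n) : ∑ i : σ, X i * pderiv i p = (n : R) • p := by
  calc ∑ i : σ, X i * pderiv i p
      = ∑ i : σ, ∑ v ∈ p.support, X i * pderiv i (monomial v (coeff v p)) := by
        refine Finset.sum_congr rfl fun i _ => ?_
        conv_lhs => rw [p.as_sum]
        rw [map_sum, Finset.mul_sum]
    _ = ∑ v ∈ p.support, ∑ i : σ, X i * pderiv i (monomial v (coeff v p)) :=
        Finset.sum_comm
    _ = ∑ v ∈ p.support, (n : R) • monomial v (coeff v p) := by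
        refine Finset.sum_congr rfl fun v hv => ?_
        rw [euler_monomial]
        congr 2
        by_contra hne
        exact (MvPolynomial.mem_support_iff.mp hv) (h.coeff_eq_zero hne)
    _ = (n : R) • p := by rw [← Finset.smul_sum, ← p.as_sum]

end Generic

namespace HarmonicAux

/-- explicit index elements -/
def i12 : Idx := ⟨(0, 1), by decide⟩
def i13 : Idx := ⟨(0, 2), by decide⟩
def i14 : Idx := ⟨(0, 3), by decide⟩
def i23 : Idx := ⟨(1, 2), by decide⟩
def i24 : Idx := ⟨(1, 3), by decide⟩
def i34 : Idx := ⟨(2, 3), by decide⟩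

lemma Z01 : Z 0 1 = X i12 := dif_pos (by decide)
lemma Z02 : Z 0 2 = X i13 := dif_pos (by decide)
lemma Z03 : Z 0 3 = X i14 := dif_pos (by decide)
lemma Z12 : Z 1 2 = X i23 := dif_pos (by decide)
lemma Z13 : Z 1 3 = X i24 := dif_pos (by decide)
lemma Z23 : Z 2 3 = X i34 := dif_pos (by decide)

lemma D01 : D 0 1 = (pderiv i12).toLinearMap := dif_pos (by decide)
lemma D02 : D 0 2 = (pderiv i13).toLinearMap := dif_pos (by decide)
lemma D03 : D 0 3 = (pderiv i14).toLinearMap := dif_pos (by decide)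
lemma D12 : D 1 2 = (pderiv i23).toLinearMap := dif_pos (by decide)
lemma D13 : D 1 3 = (pderiv i24).toLinearMap := dif_pos (by decide)
lemma D23 : D 2 3 = (pderiv i34).toLinearMap := dif_pos (by decide)

lemma lap_apply (f : Pol) :
    Lap f = 2 * (pderiv i12 (pderiv i34 f) - pderiv i13 (pderiv i24 f)
      + pderiv i14 (pderiv i23 f)) := by
  simp only [Lap, D01, D02, D03, D12, D13, D23, LinearMap.smul_apply, LinearMap.add_apply,
    LinearMap.sub_apply, LinearMap.comp_apply]
  rw [smul_eq_C_mul, map_ofNat]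
  rfl

lemma r2_eq : r2 = 2 * (X i12 * X i34 - X i13 * X i24 + X i14 * X i23) := by
  rw [r2, Z01, Z23, Z02, Z13, Z03, Z12, smul_eq_C_mul, map_ofNat]

lemma r2_homog : r2.IsHomogeneous 2 := by
  rw [r2_eq, show (2 : Pol) = C (2:ℂ) from (map_ofNat _ 2).symm]
  exact IsHomogeneous.C_mul
    ((((isHomogeneous_X _ _).mul (isHomogeneous_X _ _)).sub
      ((isHomogeneous_X _ _).mul (isHomogeneous_X _ _))).add
      ((isHomogeneous_X _ _).mul (isHomogeneous_X _ _))) 2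

lemma pderiv_two (i : Idx) : pderiv i (2 : Pol) = 0 := by
  rw [show (2:Pol) = C (2:ℂ) from (map_ofNat _ 2).symm, pderiv_C]

lemma pd_r2_12 : pderiv i12 r2 = 2 * X i34 := by
  rw [r2_eq]
  simp (config := { decide := true }) [pderiv_mul, pderiv_X, Pi.single_apply, pderiv_two]
lemma pd_r2_34 : pderiv i34 r2 = 2 * X i12 := by
  rw [r2_eq]
  simp (config := { decide := true }) [pderiv_mul, pderiv_X, Pi.single_apply, pderiv_two]
lemma pd_r2_13 : pderiv i13 r2 = -(2 * X i24) := by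
  rw [r2_eq]
  simp (config := { decide := true }) [pderiv_mul, pderiv_X, Pi.single_apply, pderiv_two]
lemma pd_r2_24 : pderiv i24 r2 = -(2 * X i13) := by
  rw [r2_eq]
  simp (config := { decide := true }) [pderiv_mul, pderiv_X, Pi.single_apply, pderiv_two]
lemma pd_r2_14 : pderiv i14 r2 = 2 * X i23 := by
  rw [r2_eq]
  simp (config := { decide := true }) [pderiv_mul, pderiv_X, Pi.single_apply, pderiv_two]
lemma pd_r2_23 : pderiv i23 r2 = 2 * X i14 := by
  rw [r2_eq]
  simp (config := { decide := true }) [pderiv_mul, pderiv_X, Pi.single_apply, pderiv_two]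

lemma univ_idx : (Finset.univ : Finset Idx) = {i12, i13, i14, i23, i24, i34} := by decide

end HarmonicAux

namespace HarmonicAux

lemma lap_isHomogeneous {f : Pol} {n : ℕ} (h : f.IsHomogeneous n) :
    (Lap f).IsHomogeneous (n - 2) := by
  rw [lap_apply, show (2:Pol) = C (2:ℂ) from (map_ofNat _ 2).symm]
  have pd2 : ∀ i j : Idx, ((pderiv i (pderiv j f)).IsHomogeneous (n-2)) := by
    intro i j
    have := pderiv_isHomogeneous (pderiv_isHomogeneous h j) i
    rwa [Nat.sub_sub] at this
  exact IsHomogeneous.C_mul (((pd2 _ _).sub (pd2 _ _)).add (pd2 _ _)) 2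

lemma lap_eq_zero_of_le_one {f : Pol} {n : ℕ} (h : f.IsHomogeneous n) (hn : n ≤ 1) :
    Lap f = 0 := by
  rw [lap_apply]
  have hz : ∀ i j : Idx, pderiv i (pderiv j f) = 0 := by
    intro i j
    have h1 := pderiv_isHomogeneous h j
    rw [show n - 1 = 0 from by omega] at h1
    exact pderiv_eq_zero_of_isHomogeneous_zero h1 i
  rw [hz, hz, hz]; ring

lemma euler6 {f : Pol} {k : ℕ} (hf : f.IsHomogeneous k) :
    X i12 * pderiv i12 f + X i13 * pderiv i13 f + X i14 * pderiv i14 f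
      + X i23 * pderiv i23 f + X i24 * pderiv i24 f + X i34 * pderiv i34 f
      = (k : Pol) * f := by
  have h := euler hf
  rw [univ_idx, Finset.sum_insert (by decide), Finset.sum_insert (by decide),
    Finset.sum_insert (by decide), Finset.sum_insert (by decide),
    Finset.sum_insert (by decide), Finset.sum_singleton, smul_eq_C_mul, map_natCast] at h
  linear_combination h

lemma lap_r2_mul {f : Pol} {k : ℕ} (hf : f.IsHomogeneous k) :
    Lap (r2 * f) = r2 * Lap f + (4 * (k : Pol) + 12) * f := by
  have he := euler6 hf
  rw [lap_apply, lap_apply]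
  simp only [pderiv_mul, map_add, map_neg, pd_r2_12, pd_r2_13, pd_r2_14, pd_r2_23,
    pd_r2_24, pd_r2_34, pderiv_two, pderiv_X_self, zero_mul, mul_zero, add_zero,
    zero_add, one_mul, mul_one, neg_mul, mul_neg, neg_neg]
  linear_combination 4 * he

lemma lap_r2_pow {H : Pol} {d : ℕ} (hH : H.IsHomogeneous d) (hh : Lap H = 0) :
    ∀ j : ℕ, Lap (r2 ^ (j+1) * H) = ((4*(j+1)*(d+j+3) : ℕ) : ℂ) • (r2 ^ j * H) := by
  intro j
  induction j with
  | zero =>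
    rw [pow_one, lap_r2_mul hH, hh, mul_zero, zero_add, pow_zero, one_mul,
      smul_eq_C_mul, map_natCast]
    push_cast; ring
  | succ j ih =>
    have hpow : (r2 ^ (j+1) * H).IsHomogeneous (2*(j+1) + d) := (r2_homog.pow (j+1)).mul hH
    rw [show r2 ^ (j+1+1) * H = r2 * (r2^(j+1) * H) from by ring, lap_r2_mul hpow, ih]
    rw [smul_eq_C_mul, smul_eq_C_mul, map_natCast, map_natCast]
    push_cast
    ring

end HarmonicAux

namespace HarmonicAux

lemma smul_isHomogeneous {f : Pol} {n : ℕ} (c : ℂ) (h : f.IsHomogeneous n) :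
    (c • f).IsHomogeneous n := by
  rw [smul_eq_C_mul]; exact h.C_mul c

lemma exists_decomp : ∀ m : ℕ, ∀ P : Pol, P.IsHomogeneous m →
    ∃ H : ℕ → Pol, (∀ j, (H j).IsHomogeneous (m - 2*j)) ∧ (∀ j, Lap (H j) = 0) ∧
      P = ∑ j ∈ Finset.range (m/2+1), r2^j * H j := by
  intro m
  induction m using Nat.strong_induction_on with
  | _ m IH =>
  intro P hP
  by_cases hm : m < 2
  · refine ⟨fun j => if j = 0 then P else 0, fun j => ?_, fun j => ?_, ?_⟩
    · by_cases hj : j = 0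
      · simpa [hj] using hP
      · simp only [hj, if_false]; exact isHomogeneous_zero _ _ _
    · by_cases hj : j = 0
      · simp only [hj, if_pos rfl]; exact lap_eq_zero_of_le_one hP (by omega)
      · simp [hj]
    · rw [show m/2 = 0 from by omega]
      simp
  · push_neg at hm
    obtain ⟨K, hKdeg, hKlap, hKsum⟩ := IH (m-2) (by omega) (Lap P) (lap_isHomogeneous hP)
    set cc : ℕ → ℕ := fun j => 4*(j+1)*((m - 2*j - 2) + j + 3) with hcc
    have hccpos : ∀ j, 0 < cc j := fun j => by positivity
    set T : ℕ → Pol := fun j => ((cc j : ℂ))⁻¹ • K j with hT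
    have hTdeg : ∀ j, (T j).IsHomogeneous (m - 2*j - 2) := by
      intro j
      have := hKdeg j
      rw [show m - 2 - 2*j = m - 2*j - 2 from by omega] at this
      exact smul_isHomogeneous _ this
    have hTlap : ∀ j, Lap (T j) = 0 := fun j => by
      rw [hT]; simp only [map_smul, hKlap j, smul_zero]
    have hkey : ∀ j, Lap (r2^(j+1) * T j) = r2^j * K j := by
      intro j
      rw [lap_r2_pow (hTdeg j) (hTlap j) j, hT, mul_smul_comm, smul_smul,
        mul_inv_cancel₀ (by exact_mod_cast (hccpos j).ne'), one_smul]
    set S : Pol := ∑ i ∈ Finset.range ((m-2)/2+1), r2^(i+1) * T i with hS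
    set H : ℕ → Pol := fun j => if j = 0 then P - S else T (j-1) with hH
    have hHsucc : ∀ j : ℕ, H (j+1) = T j := fun j => by simp [hH]
    have hSdeg : S.IsHomogeneous m := by
      apply IsHomogeneous.sum
      intro i hi
      have h2i : 2*(i+1) + (m - 2*i - 2) = m := by
        have := Finset.mem_range.mp hi
        omega
      exact h2i ▸ (r2_homog.pow (i+1)).mul (hTdeg i)
    refine ⟨H, fun j => ?_, fun j => ?_, ?_⟩
    · by_cases hj : j = 0
      · simpa [hH, hj] using hP.sub hSdeg
      · obtain ⟨j', rfl⟩ := Nat.exists_eq_succ_of_ne_zero hj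
        rw [hHsucc j']
        have := hTdeg j'
        rw [show m - 2*j' - 2 = m - 2*(j'+1) from by omega] at this
        exact this
    · by_cases hj : j = 0
      · have hH0 : H 0 = P - S := by simp [hH]
        have hLS : Lap S = Lap P := by
          rw [hS, map_sum, hKsum]
          exact Finset.sum_congr rfl fun i _ => hkey i
        rw [hj, hH0, map_sub, hLS, sub_self]
      · obtain ⟨j', rfl⟩ := Nat.exists_eq_succ_of_ne_zero hj
        rw [hHsucc j']; exact hTlap j'
    · rw [Finset.sum_range_succ']
      have hmn : m/2 = (m-2)/2 + 1 := by omega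
      have : ∑ i ∈ Finset.range (m/2), r2^(i+1) * H (i+1) = S := by
        rw [hmn, hS]
        exact Finset.sum_congr rfl fun i _ => by rw [hHsucc i]
      rw [this]
      simp only [hH, if_pos rfl, pow_zero, one_mul]
      ring

lemma zero_decomp : ∀ N : ℕ, ∀ d : ℕ → ℕ, ∀ G : ℕ → Pol,
    (∀ j, (G j).IsHomogeneous (d j)) → (∀ j, Lap (G j) = 0) →
    (∑ j ∈ Finset.range (N+1), r2^j * G j) = 0 → ∀ j ≤ N, G j = 0 := by
  intro N
  induction N with
  | zero =>
    intro d G _ _ hsum j hj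
    rw [Nat.le_zero.mp hj]
    simpa using hsum
  | succ N IH =>
    intro d G hdeg hlap hsum
    have hstep : ∑ j ∈ Finset.range (N+1),
        r2^j * (((4*(j+1)*(d (j+1) + j + 3) : ℕ):ℂ) • G (j+1)) = 0 := by
      have h0 : Lap (∑ j ∈ Finset.range (N+1+1), r2^j * G j) = 0 := by
        rw [hsum]; exact map_zero _
      rw [map_sum, Finset.sum_range_succ'] at h0
      simp only [pow_zero, one_mul, hlap 0, add_zero] at h0
      rw [← h0]
      refine Finset.sum_congr rfl fun j _ => ?_
      rw [lap_r2_pow (hdeg (j+1)) (hlap (j+1)) j]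
      exact mul_smul_comm _ _ _
    have hG1 := IH (fun j => d (j+1))
      (fun j => (((4*(j+1)*(d (j+1) + j + 3) : ℕ)):ℂ) • G (j+1))
      (fun j => smul_isHomogeneous _ (hdeg (j+1)))
      (fun j => by simp only [map_smul, hlap (j+1), smul_zero]) hstep
    have hGsucc : ∀ j ≤ N, G (j+1) = 0 := by
      intro j hj
      have := hG1 j hj
      rw [smul_eq_zero] at this
      rcases this with h | h
      · exact absurd h (Nat.cast_ne_zero.mpr (by positivity))
      · exact h
    intro j hj
    rcases Nat.eq_zero_or_eq_succ_pred j with h0 | h0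
    · rw [h0]
      rw [Finset.sum_range_succ'] at hsum
      rw [Finset.sum_eq_zero (fun i hi => by
        rw [hGsucc i (Nat.lt_succ_iff.mp (Finset.mem_range.mp hi)), mul_zero])] at hsum
      simpa using hsum
    · rw [h0]; exact hGsucc (j-1) (by omega)

end HarmonicAux

/-- Harmonic decomposition: every `m`-homogeneous polynomial `P ∈ Pol` is uniquely
a sum `P = ∑_{j=0}^{⌊m/2⌋} r^{2j} H_j` with `H_j` harmonic and `(m-2j)`-homogeneous. -/
theorem harmonic_decomposition (m : ℕ) (P : Pol) (hP : P.IsHomogeneous m) :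
    ∃! H : Fin (m / 2 + 1) → Pol,
      (∀ j, (H j).IsHomogeneous (m - 2 * (j : ℕ))) ∧
      (∀ j, Lap (H j) = 0) ∧
      P = ∑ j : Fin (m / 2 + 1), r2 ^ (j : ℕ) * H j := by
  classical
  obtain ⟨H, hdeg, hlap, hsum⟩ := HarmonicAux.exists_decomp m P hP
  refine ⟨fun j => H (j : ℕ), ⟨fun j => hdeg j, fun j => hlap j, ?_⟩, ?_⟩
  · rw [hsum]
    exact (Fin.sum_univ_eq_sum_range (fun j => r2 ^ j * H j) (m/2+1)).symm
  · rintro Y ⟨hYdeg, hYlap, hYsum⟩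
    funext j0
    set G : ℕ → Pol := fun j => if h : j < m/2+1 then Y ⟨j, h⟩ - H j else 0 with hG
    have hGdeg : ∀ j, (G j).IsHomogeneous (m - 2*j) := by
      intro j
      rw [hG]; dsimp only
      by_cases h : j < m/2+1
      · rw [dif_pos h]
        exact (hYdeg ⟨j, h⟩).sub (hdeg j)
      · rw [dif_neg h]; exact isHomogeneous_zero _ _ _
    have hGlap : ∀ j, Lap (G j) = 0 := by
      intro j
      rw [hG]; dsimp only
      by_cases h : j < m/2+1
      · rw [dif_pos h, map_sub, hYlap ⟨j, h⟩, hlap j, sub_zero]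
      · rw [dif_neg h, map_zero]
    have hGsum : ∑ j ∈ Finset.range (m/2+1), r2^j * G j = 0 := by
      rw [← Fin.sum_univ_eq_sum_range (fun j => r2^j * G j) (m/2+1)]
      have h2 : ∀ j : Fin (m/2+1), r2^(j:ℕ) * G j
          = r2^(j:ℕ) * Y j - r2^(j:ℕ) * H (j:ℕ) := by
        intro j
        rw [hG]; dsimp only
        rw [dif_pos j.isLt, mul_sub]
      rw [Finset.sum_congr rfl (fun j _ => h2 j), Finset.sum_sub_distrib, ← hYsum]
      have h3 : ∑ j : Fin (m/2+1), r2^(j:ℕ) * H (j:ℕ) = P := by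
        rw [hsum]; exact Fin.sum_univ_eq_sum_range (fun j => r2 ^ j * H j) (m/2+1)
      rw [h3, sub_self]
    have hz := HarmonicAux.zero_decomp (m/2) (fun j => m - 2*j) G hGdeg hGlap hGsum
    have h4 := hz j0 (Nat.lt_succ_iff.mp j0.isLt)
    rw [hG] at h4; dsimp only at h4
    rw [dif_pos j0.isLt] at h4
    have h5 := sub_eq_zero.mp h4
    simpa using h5
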